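/- Let q_1, …, q_n be independent, identically distributed random variables with values in [0,1], whose common cumulative distribution function H satisfies H(x) = c x^{β+1} + O(x^{β+1+δ}) as x → 0⁺ for some constants c > 0, β > −1, δ > 0. Then lim_{n→∞} n^{1/(1+β)} E[ min_{1 ≤ i ≤ n} q_i ] = ∫₀^∞ exp(−c u^{1+β}) du. -/

import Mathlib

open MeasureTheory ProbabilityTheory

section Aux
open MeasureTheory Filter Set

lemma integrableOn_exp_neg_mul_rpow' {p b : ℝ} (hp : 0 < p) (hb : 0 < b) :
    MeasureTheory.IntegrableOn (fun x : ℝ => Real.exp (-(b * x ^ p))) (Set.Ioi 0) := by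
  have h1 : (-1 : ℝ) < 1/p - 1 := by
    have : 0 < 1/p := by positivity
    linarith
  have h2 : IntegrableOn (fun y : ℝ => y ^ (1/p - 1) * Real.exp (-b * y)) (Set.Ioi 0) := by
    have h := integrableOn_rpow_mul_exp_neg_mul_rpow h1 (by norm_num : (0:ℝ) < 1) hb
    refine h.congr_fun (fun x hx => ?_) measurableSet_Ioi
    beta_reduce
    rw [Real.rpow_one]
  have h3 : IntegrableOn
      (fun y : ℝ => |p|⁻¹ * (y ^ (1/p - 1) * Real.exp (-b * y))) (Set.Ioi 0) :=
    h2.const_mul _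
  have h4 := (integrableOn_Ioi_comp_rpow_iff
      (fun y => |p|⁻¹ * (y ^ (1/p - 1) * Real.exp (-b * y))) (ne_of_gt hp)).mpr h3
  refine h4.congr_fun (fun x hx => ?_) measurableSet_Ioi
  have hx0 : (0:ℝ) < x := hx
  have hxp : (x ^ p) ^ (1/p - 1) = x ^ (1 - p) := by
    rw [← Real.rpow_mul hx0.le]
    congr 1
    field_simp
  simp only [smul_eq_mul, hxp]
  rw [abs_of_pos hp]
  rw [show p * x ^ (p-1) * (p⁻¹ * (x ^ (1-p) * Real.exp (-b * x ^ p)))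
      = (p * p⁻¹) * (x ^ (p-1) * x ^ (1-p)) * Real.exp (-b * x ^ p) by ring]
  rw [mul_inv_cancel₀ hp.ne', ← Real.rpow_add hx0]
  norm_num

end Aux

section Aux2
open Filter

lemma aux_tendsto_one_sub_pow {t : ℕ → ℝ} {L : ℝ} (h0 : ∀ n, 0 ≤ t n)
    (hL : Filter.Tendsto (fun n : ℕ => (n : ℝ) * t n) Filter.atTop (nhds L)) :
    Filter.Tendsto (fun n : ℕ => (1 - t n) ^ n) Filter.atTop (nhds (Real.exp (-L))) := by
  have ht0 : Tendsto t atTop (nhds 0) := by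
    have hinv : Tendsto (fun n : ℕ => ((n:ℝ))⁻¹) atTop (nhds 0) :=
      tendsto_inv_atTop_zero.comp tendsto_natCast_atTop_atTop
    have h := hL.mul hinv
    rw [mul_zero] at h
    refine h.congr' ?_
    filter_upwards [Filter.eventually_gt_atTop 0] with n hn
    have : (n:ℝ) ≠ 0 := Nat.cast_ne_zero.mpr hn.ne'
    field_simp
  have hhalf : ∀ᶠ n : ℕ in atTop, t n ≤ 1/2 := by
    have := ht0.eventually_lt_const (show (0:ℝ) < 1/2 by norm_num)
    filter_upwards [this] with n hn using hn.le
  have hlog : Tendsto (fun n : ℕ => (n : ℝ) * Real.log (1 - t n)) atTop (nhds (-L)) := by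
    have hub : ∀ᶠ n : ℕ in atTop, (n:ℝ) * Real.log (1 - t n) ≤ -((n:ℝ) * t n) := by
      filter_upwards [hhalf] with n hn
      have hpos : 0 < 1 - t n := by linarith
      have hle := Real.log_le_sub_one_of_pos hpos
      have hn0 : (0:ℝ) ≤ n := Nat.cast_nonneg n
      nlinarith
    have hlb : ∀ᶠ n : ℕ in atTop, -((n:ℝ) * t n) / (1 - t n) ≤ (n:ℝ) * Real.log (1 - t n) := by
      filter_upwards [hhalf] with n hn
      have hpos : 0 < 1 - t n := by linarith
      have hlog2 : -(t n) / (1 - t n) ≤ Real.log (1 - t n) := by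
        have h := Real.log_le_sub_one_of_pos (inv_pos.mpr hpos)
        rw [Real.log_inv] at h
        have he : (1 - t n)⁻¹ - 1 = t n / (1 - t n) := by field_simp; ring
        rw [he] at h
        have := neg_le_neg h
        rw [neg_neg] at this
        rw [neg_div]
        linarith [this]
      calc -((n:ℝ) * t n)/(1 - t n) = (n:ℝ) * (-(t n)/(1 - t n)) := by ring
      _ ≤ (n:ℝ) * Real.log (1 - t n) := mul_le_mul_of_nonneg_left hlog2 (Nat.cast_nonneg n)
    have hlim_lb : Tendsto (fun n : ℕ => -((n:ℝ) * t n) / (1 - t n)) atTop (nhds (-L)) := by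
      have h1' : Tendsto (fun n : ℕ => -((n:ℝ) * t n)) atTop (nhds (-L)) := hL.neg
      have h2' : Tendsto (fun n : ℕ => 1 - t n) atTop (nhds 1) := by
        have := (tendsto_const_nhds (x := (1:ℝ)) (f := atTop)).sub ht0
        simpa using this
      have := h1'.div h2' (by norm_num)
      rw [div_one] at this
      exact this
    exact tendsto_of_tendsto_of_tendsto_of_le_of_le' hlim_lb hL.neg hlb hub
  have hexp := (Real.continuous_exp.tendsto _).comp hlog
  refine hexp.congr' ?_
  filter_upwards [hhalf] with n hn
  have hpos : 0 < 1 - t n := by linarith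
  show Real.exp ((n:ℝ) * Real.log (1 - t n)) = (1 - t n) ^ n
  rw [Real.exp_nat_mul, Real.exp_log hpos]

end Aux2

/-- Let `q_1, q_2, …` be i.i.d. random variables with values in `[0,1]` whose
common cumulative distribution function `H` satisfies `H(x) = c x^{β+1} + O(x^{β+1+δ})` as
`x → 0⁺` (with `c > 0`, `β > −1`, `δ > 0`).  Then
`lim_{n→∞} n^{1/(1+β)} E[min_{1≤i≤n} q_i] = ∫₀^∞ exp(−c u^{1+β}) du`. -/
theorem expectation_min_asymptotics
    {Ω : Type*} [MeasureSpace Ω] [IsProbabilityMeasure (ℙ : Measure Ω)]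
    (q : ℕ → Ω → ℝ) (hmeas : ∀ i, Measurable (q i))
    (hval : ∀ i ω, q i ω ∈ Set.Icc (0 : ℝ) 1)
    (hindep : iIndepFun q ℙ)
    (H : ℝ → ℝ) (hH : ∀ i x, H x = (ℙ {ω | q i ω ≤ x}).toReal)
    (c β δ : ℝ) (hc : 0 < c) (hβ : -1 < β) (hδ : 0 < δ)
    (hasymp : Asymptotics.IsBigO (nhdsWithin 0 (Set.Ioi (0 : ℝ)))
      (fun x => H x - c * x ^ (β + 1)) (fun x => x ^ (β + 1 + δ))) :
    Filter.Tendsto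
      (fun n : ℕ => (n : ℝ) ^ ((1 : ℝ) / (1 + β)) * ∫ ω, (⨅ i : Fin n, q i ω) ∂ℙ)
      Filter.atTop
      (nhds (∫ u in Set.Ioi (0 : ℝ), Real.exp (-(c * u ^ (1 + β))))) := by
  obtain ⟨p, hpdef⟩ : ∃ p : ℝ, p = 1 + β := ⟨1 + β, rfl⟩
  rw [show (1:ℝ) + β = p from hpdef.symm]
  have hp : 0 < p := by rw [hpdef]; linarith
  have hba : β + 1 = p := by rw [hpdef]; ring
  -- basic properties of H
  have Hnn : ∀ x, 0 ≤ H x := fun x => by rw [hH 0 x]; exact ENNReal.toReal_nonneg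
  have Hle1 : ∀ x, H x ≤ 1 := by
    intro x
    rw [hH 0 x]
    have h := prob_le_one (μ := (ℙ : Measure Ω)) (s := {ω | q 0 ω ≤ x})
    calc (ℙ {ω | q 0 ω ≤ x}).toReal ≤ (1 : ENNReal).toReal :=
          ENNReal.toReal_mono ENNReal.one_ne_top h
    _ = 1 := ENNReal.toReal_one
  have Hmono : Monotone H := by
    intro a b hab
    rw [hH 0 a, hH 0 b]
    exact ENNReal.toReal_mono (measure_ne_top _ _)
      (measure_mono (fun ω h => le_trans h hab))
  have H1 : ∀ x : ℝ, 1 ≤ x → H x = 1 := by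
    intro x hx
    rw [hH 0 x]
    have : {ω | q 0 ω ≤ x} = Set.univ := Set.eq_univ_of_forall fun ω => ((hval 0 ω).2.trans hx)
    rw [this, measure_univ, ENNReal.toReal_one]
  have hcompl : ∀ i (t : ℝ), (ℙ {ω | t < q i ω}).toReal = 1 - H t := by
    intro i t
    have hms : MeasurableSet {ω | q i ω ≤ t} := hmeas i measurableSet_Iic
    have hs : {ω | t < q i ω} = {ω | q i ω ≤ t}ᶜ := by
      ext ω; simp [not_le]
    rw [hs, prob_compl_eq_one_sub hms, hH i t,
      ENNReal.toReal_sub_of_le prob_le_one ENNReal.one_ne_top, ENNReal.toReal_one]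
  -- properties of the minimum
  have min_nonneg : ∀ (n : ℕ) ω, 0 ≤ ⨅ i : Fin n, q i ω := by
    intro n ω
    rcases Nat.eq_zero_or_pos n with rfl | hn
    · rw [Real.iInf_of_isEmpty]
    · haveI : Nonempty (Fin n) := Fin.pos_iff_nonempty.mp hn
      exact le_ciInf fun i => (hval i ω).1
  have min_le_one : ∀ (n : ℕ) ω, (⨅ i : Fin n, q i ω) ≤ 1 := by
    intro n ω
    rcases Nat.eq_zero_or_pos n with rfl | hn
    · rw [Real.iInf_of_isEmpty]; norm_num
    · exact le_trans (ciInf_le (Finite.bddBelow_range _) ⟨0, hn⟩) (hval _ ω).2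
  have min_meas : ∀ n : ℕ, Measurable (fun ω => ⨅ i : Fin n, q i ω) :=
    fun n => Measurable.iInf (fun i => hmeas i)
  have min_int : ∀ n : ℕ, Integrable (fun ω => ⨅ i : Fin n, q i ω) ℙ := by
    intro n
    refine (integrable_const (1:ℝ)).mono' (min_meas n).aestronglyMeasurable ?_
    refine Filter.Eventually.of_forall fun ω => ?_
    rw [Real.norm_eq_abs, abs_of_nonneg (min_nonneg n ω)]
    exact min_le_one n ω
  -- tail probability of the minimum
  have hprod : ∀ (n : ℕ), 0 < n → ∀ t : ℝ,
      (ℙ {ω | t < ⨅ i : Fin n, q i ω}).toReal = (1 - H t)^n := by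
    intro n hn t
    haveI : Nonempty (Fin n) := Fin.pos_iff_nonempty.mp hn
    have hset : {ω | t < ⨅ i : Fin n, q i ω} = ⋂ i ∈ Finset.range n, q i ⁻¹' Set.Ioi t := by
      ext ω
      simp only [Set.mem_setOf_eq, Set.mem_iInter, Set.mem_preimage, Set.mem_Ioi,
        Finset.mem_range]
      constructor
      · intro h i hi
        exact h.trans_le (ciInf_le (Finite.bddBelow_range _) (⟨i, hi⟩ : Fin n))
      · intro h
        obtain ⟨i0, hi0⟩ := Finite.exists_min (fun i : Fin n => q i ω)
        have h1 : (⨅ i : Fin n, q i ω) = q i0 ω :=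
          le_antisymm (ciInf_le (Finite.bddBelow_range _) i0) (le_ciInf hi0)
        rw [h1]
        exact h i0 i0.isLt
    rw [hset,
      hindep.measure_inter_preimage_eq_mul (Finset.range n)
        (fun i _ => measurableSet_Ioi),
      ENNReal.toReal_prod]
    have he : ∀ i ∈ Finset.range n, (ℙ (q i ⁻¹' Set.Ioi t)).toReal = 1 - H t :=
      fun i _ => hcompl i t
    rw [Finset.prod_congr rfl he, Finset.prod_const, Finset.card_range]
  -- extract explicit big-O bound near 0
  obtain ⟨C0, hC0⟩ := Asymptotics.isBigO_iff.mp hasymp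
  rw [Filter.eventually_iff, Metric.mem_nhdsWithin_iff] at hC0
  obtain ⟨ε, hε, hsub⟩ := hC0
  obtain ⟨C, hCdef⟩ : ∃ C : ℝ, C = max C0 0 + 1 := ⟨_, rfl⟩
  have hCpos : 0 < C := by
    have : (0:ℝ) ≤ max C0 0 := le_max_right _ _
    rw [hCdef]; linarith
  have hb : ∀ x : ℝ, 0 < x → x < ε → |H x - c * x ^ p| ≤ C * x ^ (p + δ) := by
    intro x hx hxε
    have hx' : x ∈ Metric.ball (0:ℝ) ε ∩ Set.Ioi 0 :=
      ⟨by simpa [Real.dist_eq, abs_of_pos hx] using hxε, hx⟩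
    have hmem := hsub hx'
    rw [Set.mem_setOf_eq] at hmem
    rw [Real.norm_eq_abs, Real.norm_eq_abs, hba] at hmem
    rw [abs_of_nonneg (Real.rpow_nonneg hx.le (p + δ))] at hmem
    refine hmem.trans ?_
    have hC0C : C0 ≤ C := by
      have : C0 ≤ max C0 0 := le_max_left _ _
      rw [hCdef]; linarith
    exact mul_le_mul_of_nonneg_right hC0C (Real.rpow_nonneg hx.le _)
  -- a positive threshold  x0
  obtain ⟨x0, hx0def⟩ : ∃ x0 : ℝ, x0 = min (ε/2) (min 1 ((c/(2*C)) ^ (1/δ))) := ⟨_, rfl⟩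
  have hx0pos : 0 < x0 := by
    rw [hx0def]
    refine lt_min (by linarith) (lt_min one_pos ?_)
    exact Real.rpow_pos_of_pos (by positivity) _
  have hx0ε : x0 < ε := by
    rw [hx0def]; exact lt_of_le_of_lt (min_le_left _ _) (by linarith)
  have hx01 : x0 ≤ 1 := by
    rw [hx0def]; exact le_trans (min_le_right _ _) (min_le_left _ _)
  have hx0c : x0 ≤ (c/(2*C)) ^ (1/δ) := by
    rw [hx0def]; exact le_trans (min_le_right _ _) (min_le_right _ _)
  -- lower bound for H near zero
  have hHlow : ∀ x : ℝ, 0 < x → x ≤ x0 → c/2 * x ^ p ≤ H x := by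
    intro x hx hxx0
    have hbx := hb x hx (lt_of_le_of_lt hxx0 hx0ε)
    have h2 : C * x ^ (p+δ) ≤ c/2 * x ^ p := by
      rw [Real.rpow_add hx]
      have hxδ : x ^ δ ≤ c/(2*C) := by
        calc x ^ δ ≤ ((c/(2*C)) ^ (1/δ)) ^ δ :=
              Real.rpow_le_rpow hx.le (hxx0.trans hx0c) hδ.le
        _ = c/(2*C) := by
            rw [← Real.rpow_mul (by positivity), one_div, inv_mul_cancel₀ hδ.ne',
              Real.rpow_one]
      calc C * (x^p * x^δ) = (C * x^δ) * x^p := by ring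
      _ ≤ (C * (c/(2*C))) * x^p := by
          refine mul_le_mul_of_nonneg_right ?_ (Real.rpow_nonneg hx.le _)
          exact mul_le_mul_of_nonneg_left hxδ hCpos.le
      _ = c/2 * x^p := by field_simp
    have habs := (abs_le.mp hbx).1
    nlinarith
  -- claim K : exponential upper bound for 1 - H
  obtain ⟨c', hc'def⟩ : ∃ c' : ℝ, c' = min (c/2) (c/2 * x0 ^ p) := ⟨_, rfl⟩
  have hc' : 0 < c' := by
    rw [hc'def]
    refine lt_min (by linarith) ?_
    have := Real.rpow_pos_of_pos hx0pos p
    positivity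
  have hK : ∀ x : ℝ, 0 < x → 1 - H x ≤ Real.exp (-(c' * x ^ p)) := by
    intro x hx
    rcases le_or_gt x x0 with h | h
    · have h1 : c/2 * x^p ≤ H x := hHlow x hx h
      have h3 : (1 : ℝ) - c/2 * x^p ≤ Real.exp (-(c/2 * x^p)) := by
        have := Real.add_one_le_exp (-(c/2 * x^p)); linarith
      have h4 : Real.exp (-(c/2 * x^p)) ≤ Real.exp (-(c' * x^p)) := by
        apply Real.exp_le_exp.mpr
        have hcc : c' ≤ c/2 := hc'def ▸ min_le_left _ _
        have hxp : 0 ≤ x ^ p := Real.rpow_nonneg hx.le p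
        nlinarith
      linarith
    · rcases le_or_gt 1 x with hx1 | hx1
      · rw [H1 x hx1]
        simp [Real.exp_nonneg]
      · have hHx0 : c/2 * x0^p ≤ H x0 := hHlow x0 hx0pos le_rfl
        have hmono2 : H x0 ≤ H x := Hmono h.le
        have h4 : (1 : ℝ) - c/2 * x0^p ≤ Real.exp (-(c/2 * x0^p)) := by
          have := Real.add_one_le_exp (-(c/2 * x0^p)); linarith
        have h5 : c' * x^p ≤ c/2 * x0^p := by
          have hxp1 : x^p ≤ 1 := Real.rpow_le_one hx.le hx1.le hp.le
          have h6 : c' * x^p ≤ c' * 1 := mul_le_mul_of_nonneg_left hxp1 hc'.le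
          have h7 : c' ≤ c/2 * x0^p := hc'def ▸ min_le_right _ _
          linarith
        have h8 : Real.exp (-(c/2 * x0^p)) ≤ Real.exp (-(c' * x^p)) :=
          Real.exp_le_exp.mpr (by linarith)
        linarith
  -- scaling identities
  have hscale : ∀ m : ℕ, 0 < m → ∀ u : ℝ, 0 < u →
      ((m:ℝ)^(-(1/p)) * u)^p = (m:ℝ)⁻¹ * u^p := by
    intro m hm u hu
    have hm0 : (0:ℝ) < m := Nat.cast_pos.mpr hm
    have h1 : ((m:ℝ)^(-(1/p)))^p = (m:ℝ)⁻¹ := by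
      rw [← Real.rpow_mul hm0.le]
      rw [show -(1/p) * p = -1 by field_simp]
      exact Real.rpow_neg_one _
    rw [Real.mul_rpow (Real.rpow_nonneg hm0.le _) hu.le, h1]
  -- domination
  have hdom : ∀ (m : ℕ), 0 < m → ∀ u : ℝ, 0 < u →
      (1 - H ((m:ℝ)^(-(1/p)) * u))^m ≤ Real.exp (-(c' * u^p)) := by
    intro m hm u hu
    have hm0 : (0:ℝ) < m := Nat.cast_pos.mpr hm
    have hxpos : 0 < (m:ℝ)^(-(1/p)) * u :=
      mul_pos (Real.rpow_pos_of_pos hm0 _) hu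
    have h1 := hK _ hxpos
    have h2 : (0:ℝ) ≤ 1 - H ((m:ℝ)^(-(1/p)) * u) := by linarith [Hle1 ((m:ℝ)^(-(1/p)) * u)]
    calc (1 - H ((m:ℝ)^(-(1/p)) * u))^m
        ≤ (Real.exp (-(c' * ((m:ℝ)^(-(1/p)) * u)^p)))^m := pow_le_pow_left₀ h2 h1 m
    _ = Real.exp ((m:ℝ) * -(c' * ((m:ℝ)^(-(1/p)) * u)^p)) := (Real.exp_nat_mul _ m).symm
    _ = Real.exp (-(c' * u^p)) := by
        congr 1
        rw [hscale m hm u hu]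
        field_simp
  -- convergence of m * H(a_m u)
  have hnt : ∀ u : ℝ, 0 < u →
      Filter.Tendsto (fun m : ℕ => (m:ℝ) * H ((m:ℝ)^(-(1/p)) * u)) Filter.atTop
        (nhds (c * u ^ p)) := by
    intro u hu
    have key : Filter.Tendsto
        (fun m : ℕ => (m:ℝ) * H ((m:ℝ)^(-(1/p)) * u) - c * u ^ p) Filter.atTop (nhds 0) := by
      apply squeeze_zero_norm' (a := fun m : ℕ => (C * u ^ (p+δ)) * (m:ℝ) ^ (-(δ/p)))
      · have hsmall : Filter.Tendsto (fun m : ℕ => (m:ℝ)^(-(1/p)) * u) Filter.atTop (nhds 0) := by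
          have h1 : Filter.Tendsto (fun m : ℕ => (m:ℝ)^(-(1/p))) Filter.atTop (nhds 0) :=
            (tendsto_rpow_neg_atTop (by positivity)).comp tendsto_natCast_atTop_atTop
          have := h1.mul_const u
          simpa using this
        have hev : ∀ᶠ m : ℕ in Filter.atTop, (m:ℝ)^(-(1/p)) * u < ε :=
          hsmall.eventually_lt_const hε
        filter_upwards [hev, Filter.eventually_ge_atTop 1] with m hmε hm1
        have hm0 : (0:ℝ) < m := by exact_mod_cast Nat.lt_of_lt_of_le Nat.zero_lt_one hm1
        have hapos : (0:ℝ) < (m:ℝ)^(-(1/p)) := Real.rpow_pos_of_pos hm0 _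
        have hxpos : 0 < (m:ℝ)^(-(1/p)) * u := mul_pos hapos hu
        have hbd := hb _ hxpos hmε
        have hxp : ((m:ℝ)^(-(1/p)) * u) ^ p = (m:ℝ)⁻¹ * u^p :=
          hscale m (by exact_mod_cast hm1) u hu
        have hxpδ : ((m:ℝ)^(-(1/p)) * u) ^ (p+δ) = (m:ℝ)^(-((p+δ)/p)) * u^(p+δ) := by
          rw [Real.mul_rpow hapos.le hu.le, ← Real.rpow_mul hm0.le]
          congr 2
          field_simp
        have heq : (m:ℝ) * H ((m:ℝ)^(-(1/p)) * u) - c * u ^ p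
            = (m:ℝ) * (H ((m:ℝ)^(-(1/p)) * u) - c * ((m:ℝ)^(-(1/p)) * u) ^ p) := by
          rw [hxp]
          field_simp
        rw [heq, Real.norm_eq_abs, abs_mul, abs_of_nonneg hm0.le]
        calc (m:ℝ) * |H ((m:ℝ)^(-(1/p)) * u) - c * ((m:ℝ)^(-(1/p)) * u) ^ p|
            ≤ (m:ℝ) * (C * ((m:ℝ)^(-(1/p)) * u) ^ (p+δ)) :=
              mul_le_mul_of_nonneg_left hbd hm0.le
        _ = (C * u ^ (p+δ)) * (m:ℝ) ^ (-(δ/p)) := by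
            rw [hxpδ]
            have hmm : (m:ℝ) * (m:ℝ)^(-((p+δ)/p)) = (m:ℝ) ^ (-(δ/p)) := by
              have h3 := Real.rpow_add hm0 1 (-((p+δ)/p))
              rw [Real.rpow_one] at h3
              rw [← h3]
              congr 1
              field_simp
              ring
            calc (m:ℝ) * (C * ((m:ℝ)^(-((p+δ)/p)) * u^(p+δ)))
                = (C * u^(p+δ)) * ((m:ℝ) * (m:ℝ)^(-((p+δ)/p))) := by ring
            _ = (C * u ^ (p+δ)) * (m:ℝ) ^ (-(δ/p)) := by rw [hmm]
      · have h4 : Filter.Tendsto (fun m : ℕ => (m:ℝ) ^ (-(δ/p))) Filter.atTop (nhds 0) :=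
          (tendsto_rpow_neg_atTop (by positivity)).comp tendsto_natCast_atTop_atTop
        have := h4.const_mul (C * u ^ (p+δ))
        simpa using this
    have := key.add (tendsto_const_nhds (x := c * u ^ p))
    rw [zero_add] at this
    refine this.congr fun m => by ring
  -- pointwise limit
  have hpt : ∀ u : ℝ, 0 < u →
      Filter.Tendsto (fun m : ℕ => (1 - H ((m:ℝ)^(-(1/p)) * u))^m) Filter.atTop
        (nhds (Real.exp (-(c * u ^ p)))) :=
    fun u hu => aux_tendsto_one_sub_pow (fun m => Hnn _) (hnt u hu)
  -- dominated convergence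
  have hHmeas : Measurable H := Hmono.measurable
  have hg_int : IntegrableOn (fun u : ℝ => Real.exp (-(c' * u ^ p))) (Set.Ioi 0) :=
    integrableOn_exp_neg_mul_rpow' hp hc'
  have hFmeas : ∀ n : ℕ, AEStronglyMeasurable
      (fun u : ℝ => (1 - H ((↑(n+1):ℝ)^(-(1/p)) * u))^(n+1))
      (volume.restrict (Set.Ioi 0)) := by
    intro n
    apply Measurable.aestronglyMeasurable
    exact (measurable_const.sub (hHmeas.comp (measurable_id.const_mul _))).pow_const _
  have h_bound : ∀ n : ℕ, ∀ᵐ u ∂(volume.restrict (Set.Ioi (0:ℝ))),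
      ‖(1 - H ((↑(n+1):ℝ)^(-(1/p)) * u))^(n+1)‖ ≤ Real.exp (-(c' * u ^ p)) := by
    intro n
    rw [ae_restrict_iff' measurableSet_Ioi]
    refine Filter.Eventually.of_forall fun u hu => ?_
    have h2 : (0:ℝ) ≤ 1 - H ((↑(n+1):ℝ)^(-(1/p)) * u) := by
      linarith [Hle1 ((↑(n+1):ℝ)^(-(1/p)) * u)]
    rw [Real.norm_eq_abs, abs_of_nonneg (pow_nonneg h2 _)]
    exact hdom (n+1) n.succ_pos u hu
  have h_lim : ∀ᵐ u ∂(volume.restrict (Set.Ioi (0:ℝ))),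
      Filter.Tendsto (fun n : ℕ => (1 - H ((↑(n+1):ℝ)^(-(1/p)) * u))^(n+1)) Filter.atTop
        (nhds (Real.exp (-(c * u ^ p)))) := by
    rw [ae_restrict_iff' measurableSet_Ioi]
    refine Filter.Eventually.of_forall fun u hu => ?_
    exact (hpt u hu).comp (Filter.tendsto_add_atTop_nat 1)
  have T := MeasureTheory.tendsto_integral_of_dominated_convergence
    (fun u : ℝ => Real.exp (-(c' * u ^ p))) hFmeas hg_int h_bound h_lim
  -- identification of the rescaled expectation
  have key : ∀ n : ℕ, 0 < n →
      (n:ℝ)^((1:ℝ)/p) * ∫ ω, (⨅ i : Fin n, q i ω) ∂ℙ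
        = ∫ u in Set.Ioi (0:ℝ), (1 - H ((n:ℝ)^(-(1/p)) * u))^n := by
    intro n hn
    have hn' : (0:ℝ) < n := Nat.cast_pos.mpr hn
    have hbpos : 0 < (n:ℝ)^(-(1/p)) := Real.rpow_pos_of_pos hn' _
    have e1 := (min_int n).integral_eq_integral_meas_lt
      (Filter.Eventually.of_forall (min_nonneg n))
    have e2 : ∫ t in Set.Ioi (0:ℝ), (ℙ : Measure Ω).real {ω | t < ⨅ i : Fin n, q i ω}
        = ∫ t in Set.Ioi (0:ℝ), (1 - H t)^n :=
      setIntegral_congr_fun measurableSet_Ioi (fun t _ => hprod n hn t)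
    have e3 := integral_comp_mul_left_Ioi (fun x : ℝ => (1 - H x)^n) 0 hbpos
    rw [mul_zero] at e3
    have hbinv : ((n:ℝ)^(-(1/p)))⁻¹ = (n:ℝ)^((1:ℝ)/p) := by
      rw [Real.rpow_neg hn'.le, inv_inv]
    rw [e1, e2]
    rw [show (∫ u in Set.Ioi (0:ℝ), (1 - H ((n:ℝ)^(-(1/p)) * u))^n)
        = ((n:ℝ)^(-(1/p)))⁻¹ • ∫ x in Set.Ioi (0:ℝ), (1 - H x)^n from e3]
    rw [hbinv, smul_eq_mul]
  have T2 : Filter.Tendsto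
      (fun n : ℕ => ((↑(n+1):ℝ)^((1:ℝ)/p)) * ∫ ω, (⨅ i : Fin (n+1), q i ω) ∂ℙ)
      Filter.atTop (nhds (∫ u in Set.Ioi (0:ℝ), Real.exp (-(c * u ^ p)))) := by
    refine T.congr fun n => ?_
    exact (key (n+1) n.succ_pos).symm
  exact (Filter.tendsto_add_atTop_iff_nat 1).mp T2
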